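/- For a finite deterministic Markov decision process with n = |S| states, from every initial state x₀ ∈ S there exists an optimal action sequence whose trajectory is eventually periodic with small pre-period and period: there exist an action sequence u : ℕ → A attaining the infimum of J(x₀, ·), and natural numbers k and ℓ with ℓ ≥ 1 and k + ℓ ≤ n, such that the trajectory satisfies x(t + ℓ) = x(t) and u(t + ℓ) = u(t) for all t ≥ k. -/

import Mathlib

/-- Trajectory of a deterministic MDP: `x(0) = x₀` and `x(t+1) = f (x t) (u t)`. -/
def traj {S A : Type*} (f : S → A → S) (x0 : S) (u : ℕ → A) : ℕ → S
  | 0 => x0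
  | t + 1 => f (traj f x0 u t) (u t)

/-- Discounted cost of an action sequence from an initial state. -/
noncomputable def Jcost {S A : Type*} (f : S → A → S) (g : S → A → ℝ) (lam : ℝ)
    (x0 : S) (u : ℕ → A) : ℝ :=
  ∑' t : ℕ, lam ^ t * g (traj f x0 u t) (u t)

section DMDPaux

variable {S A : Type*} [Fintype S] [Nonempty S] [Fintype A] [Nonempty A]
variable (f : S → A → S) (g : S → A → ℝ) (lam : ℝ)

lemma traj_shift (x0 : S) (u : ℕ → A) (t : ℕ) :
    traj f x0 u (t + 1) = traj f (f x0 (u 0)) (fun n => u (n + 1)) t := by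
  induction t with
  | zero => rfl
  | succ t ih =>
    show f (traj f x0 u (t + 1)) (u (t + 1)) = f (traj f (f x0 (u 0)) (fun n => u (n + 1)) t) _
    rw [ih]

/-- A uniform bound on `|g|`. -/
noncomputable def Mbound : ℝ :=
  Finset.univ.sup' (Finset.univ_nonempty) (fun p : S × A => |g p.1 p.2|)

lemma abs_g_le (s : S) (a : A) : |g s a| ≤ Mbound g :=
  Finset.le_sup' (fun p : S × A => |g p.1 p.2|) (Finset.mem_univ (s, a))

lemma Mbound_nonneg : 0 ≤ Mbound g :=
  le_trans (abs_nonneg _) (abs_g_le g (Classical.arbitrary S) (Classical.arbitrary A))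

variable (h0 : 0 ≤ lam) (h1 : lam < 1)
include h0 h1

lemma summable_term (x0 : S) (u : ℕ → A) :
    Summable (fun t : ℕ => lam ^ t * g (traj f x0 u t) (u t)) := by
  apply Summable.of_norm_bounded
    ((summable_geometric_of_lt_one h0 h1).mul_left (Mbound g))
  intro t
  rw [norm_mul, Real.norm_eq_abs, Real.norm_eq_abs, abs_pow, abs_of_nonneg h0, mul_comm]
  exact mul_le_mul_of_nonneg_right (abs_g_le g _ _) (pow_nonneg h0 t)

lemma abs_Jcost_le (x0 : S) (u : ℕ → A) :
    |Jcost f g lam x0 u| ≤ Mbound g * (1 - lam)⁻¹ := by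
  have hs := summable_term f g lam h0 h1 x0 u
  calc |Jcost f g lam x0 u| ≤ ∑' t : ℕ, ‖lam ^ t * g (traj f x0 u t) (u t)‖ := by
        rw [← Real.norm_eq_abs]
        exact norm_tsum_le_tsum_norm hs.norm
    _ ≤ ∑' t : ℕ, Mbound g * lam ^ t := by
        apply Summable.tsum_le_tsum _ hs.norm ((summable_geometric_of_lt_one h0 h1).mul_left _)
        intro t
        rw [norm_mul, Real.norm_eq_abs, Real.norm_eq_abs, abs_pow, abs_of_nonneg h0, mul_comm]
        exact mul_le_mul_of_nonneg_right (abs_g_le g _ _) (pow_nonneg h0 t)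
    _ = Mbound g * (1 - lam)⁻¹ := by
        rw [tsum_mul_left, tsum_geometric_of_lt_one h0 h1]

lemma Jcost_rec (x0 : S) (u : ℕ → A) :
    Jcost f g lam x0 u
      = g x0 (u 0) + lam * Jcost f g lam (f x0 (u 0)) (fun n => u (n + 1)) := by
  have hs := summable_term f g lam h0 h1 x0 u
  unfold Jcost
  rw [hs.tsum_eq_zero_add]
  simp only [pow_zero, one_mul]
  show g x0 (u 0) + _ = _
  congr 1
  rw [← tsum_mul_left]
  apply tsum_congr
  intro t
  rw [traj_shift]
  ring

end DMDPaux

theorem exists_eventually_periodic_optimal_sequence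
    {S A : Type*} [Fintype S] [Nonempty S] [Fintype A] [Nonempty A]
    (f : S → A → S) (g : S → A → ℝ) (lam : ℝ) (hlam0 : 0 < lam) (hlam1 : lam < 1)
    (x0 : S) :
    ∃ u : ℕ → A,
      (∀ u' : ℕ → A, Jcost f g lam x0 u ≤ Jcost f g lam x0 u') ∧
      ∃ k ℓ : ℕ, 1 ≤ ℓ ∧ k + ℓ ≤ Fintype.card S ∧
        ∀ t : ℕ, k ≤ t →
          traj f x0 u (t + ℓ) = traj f x0 u t ∧ u (t + ℓ) = u t := by
  have h0 : 0 ≤ lam := le_of_lt hlam0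
  set C : ℝ := Mbound g * (1 - lam)⁻¹ with hC
  have hJbd : ∀ (x : S) (u : ℕ → A), |Jcost f g lam x u| ≤ C :=
    fun x u => abs_Jcost_le f g lam h0 hlam1 x u
  -- value function
  set V : S → ℝ := fun x => ⨅ u : ℕ → A, Jcost f g lam x u with hV
  have hbdd : ∀ x : S, BddBelow (Set.range fun u : ℕ → A => Jcost f g lam x u) := by
    intro x
    exact ⟨-C, by rintro _ ⟨u, rfl⟩; linarith [abs_le.1 (hJbd x u)]⟩
  have hVle : ∀ (x : S) (u : ℕ → A), V x ≤ Jcost f g lam x u := fun x u =>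
    ciInf_le (hbdd x) u
  have hleV : ∀ (x : S) (c : ℝ), (∀ u : ℕ → A, c ≤ Jcost f g lam x u) → c ≤ V x :=
    fun x c h => le_ciInf h
  have hVbd : ∀ x : S, |V x| ≤ C := by
    intro x
    rw [abs_le]
    constructor
    · exact le_trans (by linarith [abs_le.1 (hJbd x (Classical.arbitrary _))]) (hleV x (-C) (fun u => by linarith [abs_le.1 (hJbd x u)]))
    · exact le_trans (hVle x (Classical.arbitrary _)) (by linarith [abs_le.1 (hJbd x (Classical.arbitrary _))])
  -- greedy action
  have hgreedy : ∀ x : S, ∃ a : A, ∀ b : A,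
      g x a + lam * V (f x a) ≤ g x b + lam * V (f x b) := by
    intro x
    obtain ⟨a, -, ha⟩ := Finset.exists_min_image Finset.univ
      (fun a => g x a + lam * V (f x a)) ⟨Classical.arbitrary A, Finset.mem_univ _⟩
    exact ⟨a, fun b => ha b (Finset.mem_univ b)⟩
  choose μ hμ using hgreedy
  set F : S → S := fun x => f x (μ x) with hF
  -- Bellman equation for the greedy action
  have hVup : ∀ x : S, V x ≤ g x (μ x) + lam * V (F x) := by
    intro x
    -- V x ≤ g x a + lam * J(f x a, u) for every u, hence ≤ g x a + lam * V (f x a)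
    have key : ∀ u : ℕ → A, V x ≤ g x (μ x) + lam * Jcost f g lam (F x) u := by
      intro u
      have := hVle x (fun n => Nat.casesOn n (μ x) u)
      rwa [Jcost_rec f g lam h0 hlam1] at this
    have : (V x - g x (μ x)) / lam ≤ V (F x) := by
      apply hleV
      intro u
      rw [div_le_iff₀ hlam0]
      have := key u
      linarith [key u, mul_comm (Jcost f g lam (F x) u) lam]
    rw [div_le_iff₀ hlam0] at this
    linarith [mul_comm (V (F x)) lam]
  have hVdown : ∀ x : S, g x (μ x) + lam * V (F x) ≤ V x := by
    intro x
    apply hleV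
    intro u
    rw [Jcost_rec f g lam h0 hlam1 x u]
    calc g x (μ x) + lam * V (F x)
        ≤ g x (u 0) + lam * V (f x (u 0)) := hμ x (u 0)
      _ ≤ g x (u 0) + lam * Jcost f g lam (f x (u 0)) (fun n => u (n + 1)) := by
          have := hVle (f x (u 0)) (fun n => u (n + 1))
          nlinarith
  have hBell : ∀ x : S, V x = g x (μ x) + lam * V (F x) :=
    fun x => le_antisymm (hVup x) (hVdown x)
  -- the closed-loop sequence
  set useq : S → ℕ → A := fun x t => μ (F^[t] x) with huseq
  have htraj : ∀ (x : S) (t : ℕ), traj f x (useq x) t = F^[t] x := by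
    intro x t
    induction t with
    | zero => rfl
    | succ t ih =>
      show f (traj f x (useq x) t) (useq x t) = F^[t + 1] x
      rw [ih, Function.iterate_succ_apply']
  have hshift : ∀ x : S, (fun n => useq x (n + 1)) = useq (F x) := by
    intro x
    funext n
    show μ (F^[n + 1] x) = μ (F^[n] (F x))
    rw [Function.iterate_succ_apply]
  have hJμrec : ∀ x : S,
      Jcost f g lam x (useq x) = g x (μ x) + lam * Jcost f g lam (F x) (useq (F x)) := by
    intro x
    have := Jcost_rec f g lam h0 hlam1 x (useq x)
    rw [hshift x] at this
    exact this
  -- D x = Jμ x - V x satisfies D x = lam * D (F x), hence D = 0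
  set D : S → ℝ := fun x => Jcost f g lam x (useq x) - V x with hD
  have hDrec : ∀ x : S, D x = lam * D (F x) := by
    intro x
    simp only [hD]
    rw [hJμrec x, hBell x]
    ring
  have hDiter : ∀ (N : ℕ) (x : S), D x = lam ^ N * D (F^[N] x) := by
    intro N
    induction N with
    | zero => intro x; simp
    | succ N ih =>
      intro x
      rw [hDrec x, ih (F x), Function.iterate_succ_apply]
      ring
  have hDbd : ∀ x : S, |D x| ≤ 2 * C := by
    intro x
    calc |D x| ≤ |Jcost f g lam x (useq x)| + |V x| := abs_sub _ _
      _ ≤ 2 * C := by linarith [hJbd x (useq x), hVbd x]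
  have hDzero : ∀ x : S, D x = 0 := by
    intro x
    have hb : ∀ N : ℕ, |D x| ≤ lam ^ N * (2 * C) := by
      intro N
      rw [hDiter N x, abs_mul, abs_pow, abs_of_nonneg h0]
      exact mul_le_mul_of_nonneg_left (hDbd _) (pow_nonneg h0 N)
    have htend : Filter.Tendsto (fun N : ℕ => lam ^ N * (2 * C)) Filter.atTop (nhds 0) := by
      simpa using (tendsto_pow_atTop_nhds_zero_of_lt_one h0 hlam1).mul_const (2 * C)
    have : |D x| ≤ 0 := ge_of_tendsto htend (Filter.Eventually.of_forall hb)
    exact abs_eq_zero.1 (le_antisymm this (abs_nonneg _))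
  have hopt : ∀ u' : ℕ → A, Jcost f g lam x0 (useq x0) ≤ Jcost f g lam x0 u' := by
    intro u'
    have := hDzero x0
    have h2 : Jcost f g lam x0 (useq x0) = V x0 := by simp only [hD] at this; linarith
    rw [h2]
    exact hVle x0 u'
  -- eventual periodicity via pigeonhole
  set n := Fintype.card S with hn
  have hcard : Fintype.card S < Fintype.card (Fin (n + 1)) := by simp [hn]
  obtain ⟨i, j, hij, heq⟩ := Fintype.exists_ne_map_eq_of_card_lt
    (fun m : Fin (n + 1) => F^[(m : ℕ)] x0) hcard
  -- wlog i < j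
  rcases lt_or_gt_of_ne (fun h => hij (Fin.ext h) : (i : ℕ) ≠ (j : ℕ)) with hlt | hlt
  case _ =>
    refine ⟨useq x0, hopt, (i : ℕ), (j : ℕ) - (i : ℕ), by omega,
      by have := j.isLt; omega, ?_⟩
    intro t ht
    have hperiod : ∀ t : ℕ, (i : ℕ) ≤ t → F^[t + ((j : ℕ) - (i : ℕ))] x0 = F^[t] x0 := by
      intro t ht
      have : t + ((j : ℕ) - (i : ℕ)) = (t - (i : ℕ)) + (j : ℕ) := by omega
      rw [this, Function.iterate_add_apply, ← heq]
      have : t = (t - (i : ℕ)) + (i : ℕ) := by omega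
      conv_rhs => rw [this, Function.iterate_add_apply]
    constructor
    · rw [htraj, htraj, hperiod t ht]
    · show μ _ = μ _
      rw [hperiod t ht]
  case _ =>
    refine ⟨useq x0, hopt, (j : ℕ), (i : ℕ) - (j : ℕ), by omega,
      by have := i.isLt; omega, ?_⟩
    intro t ht
    have hperiod : ∀ t : ℕ, (j : ℕ) ≤ t → F^[t + ((i : ℕ) - (j : ℕ))] x0 = F^[t] x0 := by
      intro t ht
      have : t + ((i : ℕ) - (j : ℕ)) = (t - (j : ℕ)) + (i : ℕ) := by omega
      rw [this, Function.iterate_add_apply, heq]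
      have : t = (t - (j : ℕ)) + (j : ℕ) := by omega
      conv_rhs => rw [this, Function.iterate_add_apply]
    constructor
    · rw [htraj, htraj, hperiod t ht]
    · show μ _ = μ _
      rw [hperiod t ht]
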